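/- The Chebyshev coefficient (1/π)∫_{-1}^{1} arccos|t| · T_n(t) · (1−t²)^{−1/2} dt equals π/4 when n = 0, equals −4/(πn²) when n ≡ 2 (mod 4), and equals 0 for all other n ≥ 1. -/

import Mathlib

open Real Set MeasureTheory intervalIntegral

noncomputable def chebG8 (n : ℕ) (t : ℝ) : ℝ :=
  Real.arccos |t| * Real.cos (n * Real.arccos t) * ((1 - t ^ 2) ^ (-(1 / 2 : ℝ)))

lemma chebW8_int : IntervalIntegrable (fun t : ℝ => (1 - t ^ 2) ^ (-(1 / 2 : ℝ))) volume (-1) 1 := by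
  have hmeas : AEStronglyMeasurable (fun t : ℝ => (1 - t ^ 2) ^ (-(1 / 2 : ℝ))) volume := by
    exact (by measurability : Measurable (fun t : ℝ => (1 - t ^ 2) ^ (-(1 / 2 : ℝ)))).aestronglyMeasurable
  have h1 : IntervalIntegrable (fun t : ℝ => (1 - t ^ 2) ^ (-(1 / 2 : ℝ))) volume 0 1 := by
    have hbase : IntervalIntegrable (fun t : ℝ => (1 - t) ^ (-(1 / 2 : ℝ))) volume 0 1 := by
      have := (intervalIntegral.intervalIntegrable_rpow' (a := 0) (b := 1)
        (r := -(1/2 : ℝ)) (by norm_num)).comp_sub_left 1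
      simpa using this.symm
    refine hbase.mono_fun hmeas.restrict
      ((ae_restrict_iff' measurableSet_uIoc).mpr (ae_of_all _ fun t ht => ?_))
    rw [uIoc_of_le (by norm_num : (0:ℝ) ≤ 1)] at ht
    obtain ⟨ht0, ht1⟩ := ht
    rcases eq_or_lt_of_le ht1 with h | h
    · subst h; norm_num
    · have hpos : (0:ℝ) < 1 - t := by linarith
      have hle : 1 - t ≤ 1 - t ^ 2 := by nlinarith
      simp only [Real.norm_eq_abs]
      rw [abs_of_nonneg (Real.rpow_nonneg (by nlinarith) _),
        abs_of_nonneg (Real.rpow_nonneg hpos.le _)]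
      exact Real.rpow_le_rpow_of_nonpos hpos hle (by norm_num)
  have h2 : IntervalIntegrable (fun t : ℝ => (1 - t ^ 2) ^ (-(1 / 2 : ℝ))) volume (-1) 0 := by
    have hbase : IntervalIntegrable (fun t : ℝ => (1 + t) ^ (-(1 / 2 : ℝ))) volume (-1) 0 := by
      have := (intervalIntegral.intervalIntegrable_rpow' (a := 0) (b := 1)
        (r := -(1/2 : ℝ)) (by norm_num)).comp_add_right 1
      simpa [add_comm] using this
    refine hbase.mono_fun hmeas.restrict
      ((ae_restrict_iff' measurableSet_uIoc).mpr (ae_of_all _ fun t ht => ?_))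
    rw [uIoc_of_le (by norm_num : (-1:ℝ) ≤ 0)] at ht
    obtain ⟨ht0, ht1⟩ := ht
    have hpos : (0:ℝ) < 1 + t := by linarith
    have hle : 1 + t ≤ 1 - t ^ 2 := by nlinarith
    simp only [Real.norm_eq_abs]
    rw [abs_of_nonneg (Real.rpow_nonneg (by nlinarith) _),
      abs_of_nonneg (Real.rpow_nonneg hpos.le _)]
    exact Real.rpow_le_rpow_of_nonpos hpos hle (by norm_num)
  exact h2.trans h1

lemma chebG8_bound (n : ℕ) (t : ℝ) :
    |chebG8 n t| ≤ Real.pi * ((1 - t ^ 2) ^ (-(1 / 2 : ℝ))) := by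
  have hw : (0:ℝ) ≤ (1 - t ^ 2) ^ (-(1 / 2 : ℝ)) := by
    rcases le_or_gt (1 - t ^ 2) 0 with h | h
    · rcases eq_or_lt_of_le h with h' | h'
      · rw [h']; simp
      · have he : (-(1/2:ℝ)) * Real.pi = -(Real.pi/2) := by ring
        rw [Real.rpow_def_of_neg h', he, Real.cos_neg, Real.cos_pi_div_two, mul_zero]
    · exact Real.rpow_nonneg h.le _
  have ha : abs (Real.arccos (abs t)) ≤ Real.pi := by
    rw [abs_of_nonneg (Real.arccos_nonneg _)]; exact Real.arccos_le_pi _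
  have hc : abs (Real.cos (n * Real.arccos t)) ≤ 1 := Real.abs_cos_le_one _
  have h3 : abs (Real.arccos (abs t)) * abs (Real.cos (n * Real.arccos t)) ≤ Real.pi * 1 :=
    mul_le_mul ha hc (abs_nonneg _) Real.pi_pos.le
  unfold chebG8
  rw [abs_mul, abs_mul, abs_of_nonneg hw]
  refine le_trans (mul_le_mul_of_nonneg_right h3 hw) ?_
  rw [mul_one]

lemma chebG8_meas (n : ℕ) : Measurable (chebG8 n) := by
  have hw : Measurable (fun t : ℝ => (1 - t ^ 2) ^ (-(1 / 2 : ℝ))) := by measurability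
  exact ((Real.measurable_arccos.comp measurable_abs).mul
    (Real.measurable_cos.comp (Real.measurable_arccos.const_mul _))).mul hw

lemma chebG8_int (n : ℕ) : IntervalIntegrable (chebG8 n) volume (-1) 1 := by
  refine (chebW8_int.const_mul Real.pi).mono_fun ((chebG8_meas n).aestronglyMeasurable).restrict
    (ae_of_all _ fun t => ?_)
  simp only [Real.norm_eq_abs]
  exact (chebG8_bound n t).trans (le_abs_self _)

lemma chebG8_subst (n : ℕ) :
    ∫ t in (-1 : ℝ)..1, chebG8 n t
      = ∫ x in (0:ℝ)..Real.pi, Real.arccos |Real.cos x| * Real.cos (n * x) := by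
  have hpi : (0:ℝ) ≤ Real.pi := Real.pi_pos.le
  have hmin : min Real.pi 0 = 0 := min_eq_right hpi
  have hmax : max Real.pi 0 = Real.pi := max_eq_left hpi
  have hIcc : (uIcc Real.pi 0) = Icc 0 Real.pi := by
    rw [uIcc_comm, uIcc_of_le hpi]
  have key := intervalIntegral.integral_comp_smul_deriv''' (f := Real.cos)
      (f' := fun x => -Real.sin x) (g := chebG8 n) (a := Real.pi) (b := 0)
      (Real.continuous_cos.continuousOn)
      (fun x _ => (Real.hasDerivAt_cos x).hasDerivWithinAt)
      ?_ ?_ ?_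
  · rw [Real.cos_pi, Real.cos_zero] at key
    rw [← key, intervalIntegral.integral_symm 0 Real.pi]
    rw [← intervalIntegral.integral_neg]
    refine intervalIntegral.integral_congr ?_
    intro x hx
    rw [uIcc_of_le hpi] at hx
    have hs : 0 ≤ Real.sin x := Real.sin_nonneg_of_nonneg_of_le_pi hx.1 hx.2
    have harc : Real.arccos (Real.cos x) = x := Real.arccos_cos hx.1 hx.2
    simp only [Function.comp, smul_eq_mul, neg_mul, neg_neg]
    by_cases hsz : Real.sin x = 0
    · have h1 : Real.cos x = 1 ∨ Real.cos x = -1 := by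
        have hsq := Real.sin_sq_add_cos_sq x
        have : (Real.cos x - 1) * (Real.cos x + 1) = 0 := by nlinarith
        rcases mul_eq_zero.1 this with h | h
        · left; linarith
        · right; linarith
      have h2 : |Real.cos x| = 1 := by rcases h1 with h | h <;> rw [h] <;> norm_num
      unfold chebG8
      rw [h2, Real.arccos_one, hsz]
      ring
    · have hspos : 0 < Real.sin x := lt_of_le_of_ne hs (Ne.symm hsz)
      unfold chebG8
      rw [harc]
      have h2 : 1 - Real.cos x ^ 2 = Real.sin x ^ 2 := by
        have := Real.sin_sq_add_cos_sq x; linarith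
      have h3 : (Real.sin x ^ 2 : ℝ) ^ (-(1/2 : ℝ)) = (Real.sin x)⁻¹ := by
        rw [← Real.rpow_natCast (Real.sin x) 2, ← Real.rpow_mul hs]
        norm_num [Real.rpow_neg_one]
      rw [h2, h3]
      field_simp
  · -- continuity on image of interior
    rw [hmin, hmax]
    have hsub : Real.cos '' Ioo 0 Real.pi ⊆ Ioo (-1) 1 := by
      rintro _ ⟨x, hx, rfl⟩
      constructor
      · have := Real.cos_lt_cos_of_nonneg_of_le_pi (by linarith [hx.1]) le_rfl hx.2
        simpa [Real.cos_pi] using this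
      · have := Real.cos_lt_cos_of_nonneg_of_le_pi le_rfl hx.2.le hx.1
        simpa [Real.cos_zero] using this
    refine ContinuousOn.mono ?_ hsub
    intro t ht
    refine ContinuousAt.continuousWithinAt ?_
    have h0 : (1 : ℝ) - t ^ 2 ≠ 0 := by
      have h1 : t ^ 2 < 1 := by nlinarith [ht.1, ht.2]
      exact ne_of_gt (by linarith)
    exact ((Real.continuous_arccos.comp continuous_abs).continuousAt.mul
      (Real.continuous_cos.continuousAt.comp
        ((Real.continuous_arccos.continuousAt).const_mul _))).mul
      (((continuousAt_const.sub (continuousAt_id.pow 2 :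
          ContinuousAt (fun t : ℝ => t ^ 2) t))).rpow_const (Or.inl h0))
  · -- integrability of g on cos '' [[π,0]]
    have hsub : Real.cos '' (uIcc Real.pi 0) ⊆ Icc (-1) 1 := by
      rintro _ ⟨x, _, rfl⟩
      exact ⟨Real.neg_one_le_cos x, Real.cos_le_one x⟩
    refine IntegrableOn.mono_set ?_ hsub
    rw [← intervalIntegrable_iff_integrableOn_Icc_of_le (by norm_num)]
    exact chebG8_int n
  · -- integrability of the substituted integrand
    rw [hIcc]
    refine Measure.integrableOn_of_bounded (measure_Icc_lt_top.ne) ?_ (M := Real.pi)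
      ((ae_restrict_iff' measurableSet_Icc).mpr (ae_of_all _ fun x hx => ?_))
    · exact ((Real.measurable_sin.neg).smul
        ((chebG8_meas n).comp Real.measurable_cos)).aestronglyMeasurable
    · have hs : 0 ≤ Real.sin x := Real.sin_nonneg_of_nonneg_of_le_pi hx.1 hx.2
      simp only [Function.comp, smul_eq_mul, Real.norm_eq_abs, abs_mul, abs_neg,
        abs_of_nonneg hs]
      by_cases hsz : Real.sin x = 0
      · rw [hsz]; simpa using Real.pi_pos.le
      · have hspos : 0 < Real.sin x := lt_of_le_of_ne hs (Ne.symm hsz)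
        have hb := chebG8_bound n (Real.cos x)
        have h2 : 1 - Real.cos x ^ 2 = Real.sin x ^ 2 := by
          have := Real.sin_sq_add_cos_sq x; linarith
        have h3 : ((1:ℝ) - Real.cos x ^ 2) ^ (-(1/2 : ℝ)) = (Real.sin x)⁻¹ := by
          rw [h2, ← Real.rpow_natCast (Real.sin x) 2, ← Real.rpow_mul hs]
          norm_num [Real.rpow_neg_one]
        rw [h3] at hb
        calc Real.sin x * |chebG8 n (Real.cos x)|
            ≤ Real.sin x * (Real.pi * (Real.sin x)⁻¹) :=
              mul_le_mul_of_nonneg_left hb hs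
          _ = Real.pi := by field_simp

lemma chebI8_cont (n : ℕ) : Continuous (fun x : ℝ => Real.arccos |Real.cos x| * Real.cos (n * x)) :=
  (Real.continuous_arccos.comp (continuous_abs.comp Real.continuous_cos)).mul
    (Real.continuous_cos.comp (continuous_const.mul continuous_id))

lemma chebI8_split (n : ℕ) :
    (∫ x in (0:ℝ)..Real.pi, Real.arccos |Real.cos x| * Real.cos (n * x))
      = (∫ x in (0:ℝ)..(Real.pi/2), x * Real.cos (n * x))
        + ∫ x in (Real.pi/2)..Real.pi, (Real.pi - x) * Real.cos (n * x) := by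
  have hpi := Real.pi_pos
  have hsplit := intervalIntegral.integral_add_adjacent_intervals
    (a := (0:ℝ)) (b := Real.pi/2) (c := Real.pi) (μ := MeasureTheory.volume)
    ((chebI8_cont n).intervalIntegrable _ _) ((chebI8_cont n).intervalIntegrable _ _)
  rw [← hsplit]
  congr 1
  · refine intervalIntegral.integral_congr fun x hx => ?_
    rw [uIcc_of_le (by linarith)] at hx
    have hc : 0 ≤ Real.cos x := Real.cos_nonneg_of_mem_Icc ⟨by linarith [hx.1], hx.2⟩
    rw [abs_of_nonneg hc, Real.arccos_cos hx.1 (by linarith [hx.2])]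
  · refine intervalIntegral.integral_congr fun x hx => ?_
    rw [uIcc_of_le (by linarith)] at hx
    have hc : Real.cos x ≤ 0 :=
      Real.cos_nonpos_of_pi_div_two_le_of_le hx.1 (by linarith [hx.2])
    have habs : |Real.cos x| = Real.cos (Real.pi - x) := by
      rw [Real.cos_pi_sub, abs_of_nonpos hc]
    rw [habs, Real.arccos_cos (by linarith [hx.2]) (by linarith [hx.1])]

theorem stmt_8 (n : ℕ) :
    (1 / Real.pi) * ∫ t in (-1 : ℝ)..1,
        Real.arccos |t| * Real.cos (n * Real.arccos t) * ((1 - t ^ 2) ^ (-(1 / 2 : ℝ))) =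
      if n = 0 then Real.pi / 4
      else if n % 4 = 2 then -4 / (Real.pi * n ^ 2) else 0 := by
  have hpi := Real.pi_pos
  have hI : (∫ t in (-1 : ℝ)..1,
        Real.arccos |t| * Real.cos (n * Real.arccos t) * ((1 - t ^ 2) ^ (-(1 / 2 : ℝ))))
      = (∫ x in (0:ℝ)..(Real.pi/2), x * Real.cos (n * x))
        + ∫ x in (Real.pi/2)..Real.pi, (Real.pi - x) * Real.cos (n * x) := by
    rw [show (∫ t in (-1 : ℝ)..1,
        Real.arccos |t| * Real.cos (n * Real.arccos t) * ((1 - t ^ 2) ^ (-(1 / 2 : ℝ))))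
      = ∫ t in (-1 : ℝ)..1, chebG8 n t from rfl, chebG8_subst n, chebI8_split n]
  rw [hI]
  by_cases hn : n = 0
  · subst hn
    rw [if_pos rfl]
    simp only [Nat.cast_zero, zero_mul, Real.cos_zero, mul_one]
    have e2 : (∫ x in (Real.pi/2)..Real.pi, (Real.pi - x)) = ∫ x in (0:ℝ)..(Real.pi/2), x := by
      have := intervalIntegral.integral_comp_sub_left (a := Real.pi/2) (b := Real.pi)
        (fun x : ℝ => x) Real.pi
      rw [this]
      norm_num
      rw [show Real.pi - Real.pi/2 = Real.pi/2 by ring]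
    rw [e2, integral_id]
    field_simp
    ring
  · have hn' : (n:ℝ) ≠ 0 := Nat.cast_ne_zero.mpr hn
    have hsin : ∀ x : ℝ, HasDerivAt (fun x : ℝ => Real.sin (n*x)) (Real.cos (n*x) * n) x := by
      intro x
      simpa [Function.comp_def] using (Real.hasDerivAt_sin (n*x)).comp x ((hasDerivAt_id x).const_mul (n:ℝ))
    have hcos : ∀ x : ℝ, HasDerivAt (fun x : ℝ => Real.cos (n*x)) (-Real.sin (n*x) * n) x := by
      intro x
      simpa [Function.comp_def] using (Real.hasDerivAt_cos (n*x)).comp x ((hasDerivAt_id x).const_mul (n:ℝ))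
    have hF : ∀ x : ℝ, HasDerivAt
        (fun x : ℝ => x * Real.sin (n*x) / n + Real.cos (n*x) / n^2)
        (x * Real.cos (n*x)) x := by
      intro x
      have := (((hasDerivAt_id x).mul (hsin x)).div_const (n:ℝ)).add
        ((hcos x).div_const ((n:ℝ)^2))
      refine this.congr_deriv ?_
      simp only [id]
      field_simp
      ring
    have hG : ∀ x : ℝ, HasDerivAt
        (fun x : ℝ => (Real.pi - x) * Real.sin (n*x) / n - Real.cos (n*x) / n^2)
        ((Real.pi - x) * Real.cos (n*x)) x := by
      intro x
      have := ((((hasDerivAt_const x Real.pi).sub (hasDerivAt_id x)).mul (hsin x)).div_const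
        (n:ℝ)).sub ((hcos x).div_const ((n:ℝ)^2))
      refine this.congr_deriv ?_
      simp only [Pi.sub_apply, id]
      field_simp
      ring
    have h1 : (∫ x in (0:ℝ)..(Real.pi/2), x * Real.cos (n * x))
        = ((Real.pi/2) * Real.sin (n*(Real.pi/2)) / n + Real.cos (n*(Real.pi/2)) / n^2)
          - (0 * Real.sin (n*0) / n + Real.cos (n*0) / n^2) :=
      intervalIntegral.integral_eq_sub_of_hasDerivAt (fun x _ => hF x)
        (((continuous_id.mul (Real.continuous_cos.comp
          (continuous_const.mul continuous_id)))).intervalIntegrable _ _)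
    have h2 : (∫ x in (Real.pi/2)..Real.pi, (Real.pi - x) * Real.cos (n * x))
        = ((Real.pi - Real.pi) * Real.sin (n*Real.pi) / n - Real.cos (n*Real.pi) / n^2)
          - ((Real.pi - Real.pi/2) * Real.sin (n*(Real.pi/2)) / n
              - Real.cos (n*(Real.pi/2)) / n^2) :=
      intervalIntegral.integral_eq_sub_of_hasDerivAt (fun x _ => hG x)
        ((((continuous_const.sub continuous_id).mul (Real.continuous_cos.comp
          (continuous_const.mul continuous_id)))).intervalIntegrable _ _)
    rw [h1, h2, if_neg hn]
    rw [mul_zero, Real.sin_zero, Real.cos_zero]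
    have hcosnpi : Real.cos (n * Real.pi) = (-1 : ℝ)^n := by
      have := Real.cos_nat_mul_pi_sub 0 n
      simpa using this
    have hkey : Real.cos ((n:ℝ) * (Real.pi/2)) = Real.cos (((n % 4 : ℕ) : ℝ) * (Real.pi/2)) := by
      have hcast : (n:ℝ) = ((n % 4 : ℕ) : ℝ) + 4 * ((n / 4 : ℕ) : ℝ) := by
        exact_mod_cast (Nat.mod_add_div n 4).symm
      have harg : (((n % 4 : ℕ) : ℝ) + 4 * ((n / 4 : ℕ) : ℝ)) * (Real.pi/2)
          = ((n % 4 : ℕ) : ℝ) * (Real.pi/2) + ((n / 4 : ℕ) : ℝ) * (2 * Real.pi) := by ring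
      rw [hcast, harg, Real.cos_add_nat_mul_two_pi]
    have hr : n % 4 = 0 ∨ n % 4 = 1 ∨ n % 4 = 2 ∨ n % 4 = 3 := by omega
    rcases hr with h | h | h | h
    · have hv : Real.cos ((n:ℝ) * (Real.pi/2)) = 1 := by
        rw [hkey, h]; norm_num
      have hm : ((-1:ℝ))^n = 1 := (Nat.even_iff.mpr (by omega)).neg_one_pow
      rw [hcosnpi, hv, hm, if_neg (by omega)]
      field_simp
      ring
    · have hv : Real.cos ((n:ℝ) * (Real.pi/2)) = 0 := by
        rw [hkey, h]
        push_cast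
        rw [show (1:ℝ) * (Real.pi/2) = Real.pi/2 by ring, Real.cos_pi_div_two]
      have hm : ((-1:ℝ))^n = -1 := (Nat.odd_iff.mpr (by omega)).neg_one_pow
      rw [hcosnpi, hv, hm, if_neg (by omega)]
      field_simp
      ring
    · have hv : Real.cos ((n:ℝ) * (Real.pi/2)) = -1 := by
        rw [hkey, h]
        push_cast
        rw [show (2:ℝ) * (Real.pi/2) = Real.pi by ring, Real.cos_pi]
      have hm : ((-1:ℝ))^n = 1 := (Nat.even_iff.mpr (by omega)).neg_one_pow
      rw [hcosnpi, hv, hm, if_pos h]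
      field_simp
      ring
    · have hv : Real.cos ((n:ℝ) * (Real.pi/2)) = 0 := by
        rw [hkey, h]
        push_cast
        rw [show (3:ℝ) * (Real.pi/2) = Real.pi + Real.pi/2 by ring]
        simp [Real.cos_add]
      have hm : ((-1:ℝ))^n = -1 := (Nat.odd_iff.mpr (by omega)).neg_one_pow
      rw [hcosnpi, hv, hm, if_neg (by omega)]
      field_simp
      ring
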